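/- Let N = (N,t) be a labelled level-1 network on X, C a cycle of N, and x, y, z ∈ X with x ∈ H(C), y, z ∈ R(C) − H(C), and t(v_C(z)) = t(r(C)) ≠ t(v_C(y)). Then v_C(z) lies on the directed path from v_C(y) to h(C) if and only if δ_N(x,y,z) = δ_N(x,y) = δ_N(y,z) ≠ δ_N(x,z) (i.e., y|xz is a δ_N-triplet). -/

import Mathlib

/-- A rooted phylogenetic network on leaf set `X`: a rooted DAG whose leaves are
identified with `X`, with no vertex of indegree one and outdegree one. -/
structure PhyloNetwork (X : Type) [Fintype X] [DecidableEq X] where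
  V : Type
  [instFin : Fintype V]
  [instDec : DecidableEq V]
  adj : V → V → Prop
  root : V
  leaf : X → V
  acyclic : ∀ v : V, ¬ Relation.TransGen adj v v
  root_no_in : ∀ u : V, ¬ adj u root
  connected : ∀ v : V, Relation.ReflTransGen adj root v
  leaf_inj : Function.Injective leaf
  leaf_no_out : ∀ (x : X) (w : V), ¬ adj (leaf x) w
  leaves_only : ∀ v : V, (∀ w : V, ¬ adj v w) → v = root ∨ ∃ x, leaf x = v
  no_inout_one : ∀ v : V, ¬ ((∃! u : V, adj u v) ∧ (∃! w : V, adj v w))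

namespace PhyloNetwork

variable {X : Type} [Fintype X] [DecidableEq X]

/-- Reachability by a directed path. -/
def reaches (N : PhyloNetwork X) : N.V → N.V → Prop := Relation.ReflTransGen N.adj

/-- The offspring set of a vertex: all leaves below it. -/
def F (N : PhyloNetwork X) (v : N.V) : Set X := {x | N.reaches v (N.leaf x)}

/-- `v` is a leaf vertex. -/
def IsLeafV (N : PhyloNetwork X) (v : N.V) : Prop := ∃ x, N.leaf x = v

/-- `v` is a lowest common ancestor of the set `Y` of leaves. -/
def IsLca (N : PhyloNetwork X) (Y : Finset X) (v : N.V) : Prop :=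
  (∀ x ∈ Y, x ∈ N.F v) ∧ ∀ w : N.V, N.adj v w → ¬ (∀ x ∈ Y, x ∈ N.F w)

/-- A cycle of a (level-1) network: two edge-disjoint, internally vertex-disjoint
directed paths from a root `r` to a hybrid `h`, with at least 3 vertices in total.
`side1` and `side2` list the internal vertices of the two sides in order. -/
structure NCycle (N : PhyloNetwork X) where
  r : N.V
  h : N.V
  side1 : List N.V
  side2 : List N.V
  chain1 : List.Chain N.adj r (side1 ++ [h])
  chain2 : List.Chain N.adj r (side2 ++ [h])
  ne : r ≠ h
  nodup1 : (r :: (side1 ++ [h])).Nodup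
  nodup2 : (r :: (side2 ++ [h])).Nodup
  disj : ∀ v ∈ side1, v ∉ side2
  nontriv : side1 ≠ [] ∨ side2 ≠ []

/-- The vertex set of a cycle. -/
def NCycle.verts {N : PhyloNetwork X} (C : NCycle N) : Set N.V :=
  {C.r, C.h} ∪ {v | v ∈ C.side1} ∪ {v | v ∈ C.side2}

/-- A level-1 network: every vertex belongs to at most one cycle. -/
def IsLevelOne (N : PhyloNetwork X) : Prop :=
  ∀ C C' : NCycle N, ∀ v : N.V, v ∈ C.verts → v ∈ C'.verts → C.verts = C'.verts

/-- `R(C)`: the leaves below the root of the cycle `C`. -/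
def NCycle.RC {N : PhyloNetwork X} (C : NCycle N) : Set X := N.F C.r

/-- `H(C)`: the leaves below the hybrid of the cycle `C`. -/
def NCycle.HC {N : PhyloNetwork X} (C : NCycle N) : Set X := N.F C.h

/-- `v` is the last ancestor `v_C(x)` of the leaf `x` lying in the cycle `C`. -/
def NCycle.LastAnc {N : PhyloNetwork X} (C : NCycle N) (v : N.V) (x : X) : Prop :=
  v ∈ C.verts ∧ N.reaches v (N.leaf x) ∧
    ∀ w ∈ C.verts, N.reaches w (N.leaf x) → N.reaches w v

end PhyloNetwork

/-- A symbolic 3-dissimilarity on `X` with values in `M ∪ {⊙}` (`⊙` = `none`):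
singletons get `⊙`, sets of size 2 or 3 get values in `M`. -/
structure SymbolicDissim3 (X M : Type) [DecidableEq X] where
  val : Finset X → Option M
  singleton_none : ∀ A : Finset X, A.card = 1 → val A = none
  pair_some : ∀ A : Finset X, A.card = 2 ∨ A.card = 3 → val A ≠ none

/-- The labelled network `(N,t)` represents `δ`: for every `Y ⊆ X` of size 2 or 3,
`δ(Y) = t(lca_N(Y))`. -/
def PhyloNetwork.Represents {X M : Type} [Fintype X] [DecidableEq X]
    (N : PhyloNetwork X) (t : N.V → M) (d : SymbolicDissim3 X M) : Prop :=
  ∀ Y : Finset X, Y.card = 2 ∨ Y.card = 3 → ∀ v : N.V, N.IsLca Y v → d.val Y = some (t v)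

/-- `δ` is level-1 representable. -/
def SymbolicDissim3.LevelOneRepresentable {X M : Type} [Fintype X] [DecidableEq X]
    (d : SymbolicDissim3 X M) : Prop :=
  ∃ (N : PhyloNetwork X) (t : N.V → M), N.IsLevelOne ∧ N.Represents t d

namespace PhyloNetwork

section Helpers

variable {X : Type} [Fintype X] [DecidableEq X] {N : PhyloNetwork X}

lemma reaches_refl (a : N.V) : N.reaches a a := Relation.ReflTransGen.refl

lemma reaches_trans {a b c : N.V} (h1 : N.reaches a b) (h2 : N.reaches b c) :
    N.reaches a c := Relation.ReflTransGen.trans h1 h2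

lemma no_cycle {a b : N.V} (h1 : N.adj a b) (h2 : N.reaches b a) : False :=
  N.acyclic a (Relation.TransGen.head' h1 h2)

lemma reaches_antisymm {a b : N.V} (h1 : N.reaches a b) (h2 : N.reaches b a) : a = b := by
  rcases Relation.ReflTransGen.cases_head h1 with h | ⟨c, hac, hcb⟩
  · exact h
  · exact (no_cycle hac (reaches_trans hcb h2)).elim

lemma chain_mem_reaches {a : N.V} {l : List N.V} (hc : List.Chain N.adj a l) :
    ∀ v ∈ a :: l, N.reaches a v := by
  induction l generalizing a with
  | nil =>
    intro v hv
    simp only [List.mem_singleton] at hv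
    subst hv; exact reaches_refl _
  | cons b l ih =>
    rcases List.chain_cons.mp hc with ⟨hab, hc'⟩
    intro v hv
    rcases List.mem_cons.mp hv with rfl | hv'
    · exact reaches_refl _
    · exact Relation.ReflTransGen.head hab (ih hc' v hv')

lemma chain_mem_transGen {a : N.V} {l : List N.V} (hc : List.Chain N.adj a l) :
    ∀ v ∈ l, Relation.TransGen N.adj a v := by
  induction l generalizing a with
  | nil => simp
  | cons b l ih =>
    rcases List.chain_cons.mp hc with ⟨hab, hc'⟩
    intro v hv
    rcases List.mem_cons.mp hv with rfl | hv'
    · exact Relation.TransGen.single hab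
    · exact Relation.TransGen.head hab (ih hc' v hv')

lemma chain_reaches_last {a b : N.V} {l : List N.V} (hc : List.Chain N.adj a l)
    (hb : (a :: l).getLast (List.cons_ne_nil _ _) = b) :
    ∀ v ∈ a :: l, N.reaches v b :=
  List.IsChain.backwards_cons_induction (fun u => N.reaches u b) l hc hb
    (fun _ _ h hr => Relation.ReflTransGen.head h hr) (reaches_refl b)

lemma chain_next {a : N.V} {l : List N.V} (hc : List.Chain N.adj a l) :
    ∀ v ∈ a :: l, v = (a :: l).getLast (List.cons_ne_nil _ _) ∨ ∃ c ∈ l, N.adj v c := by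
  induction l generalizing a with
  | nil =>
    intro v hv
    simp only [List.mem_singleton] at hv
    subst hv; exact Or.inl rfl
  | cons b l ih =>
    rcases List.chain_cons.mp hc with ⟨hab, hc'⟩
    intro v hv
    rcases List.mem_cons.mp hv with rfl | hv'
    · exact Or.inr ⟨b, List.mem_cons_self, hab⟩
    · rcases ih hc' v hv' with h | ⟨c, hcl, hvc⟩
      · exact Or.inl (by rw [List.getLast_cons_cons]; exact h)
      · exact Or.inr ⟨c, List.mem_cons_of_mem _ hcl, hvc⟩

lemma getLast_eq_of_eq {α : Type*} {l l' : List α} (h : l = l') (hl : l ≠ []) (hl' : l' ≠ []) :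
    l.getLast hl = l'.getLast hl' := by subst h; rfl

lemma getLast_cons_append_singleton {α : Type*} (a b : α) (l : List α) :
    (a :: (l ++ [b])).getLast (List.cons_ne_nil _ _) = b := by
  induction l generalizing a with
  | nil => rfl
  | cons c l ih => rw [List.cons_append, List.getLast_cons_cons]; exact ih c

lemma NCycle.mem_verts {C : NCycle N} {v : N.V} :
    v ∈ C.verts ↔ v = C.r ∨ v = C.h ∨ v ∈ C.side1 ∨ v ∈ C.side2 := by
  simp [NCycle.verts, Set.mem_union, Set.mem_insert_iff, Set.mem_setOf_eq, or_assoc]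

lemma NCycle.root_mem (C : NCycle N) : C.r ∈ C.verts :=
  NCycle.mem_verts.mpr (Or.inl rfl)

lemma NCycle.hyb_mem (C : NCycle N) : C.h ∈ C.verts :=
  NCycle.mem_verts.mpr (Or.inr (Or.inl rfl))

lemma NCycle.root_reaches {C : NCycle N} {v : N.V} (hv : v ∈ C.verts) : N.reaches C.r v := by
  rcases NCycle.mem_verts.mp hv with rfl | rfl | h | h
  · exact reaches_refl _
  · exact chain_mem_reaches C.chain1 _ (by simp)
  · exact chain_mem_reaches C.chain1 _ (by simp [h])
  · exact chain_mem_reaches C.chain2 _ (by simp [h])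

lemma NCycle.reaches_hyb {C : NCycle N} {v : N.V} (hv : v ∈ C.verts) : N.reaches v C.h := by
  rcases NCycle.mem_verts.mp hv with rfl | rfl | h | h
  · exact chain_reaches_last C.chain1 (getLast_cons_append_singleton _ _ _) _ (by simp)
  · exact reaches_refl _
  · exact chain_reaches_last C.chain1 (getLast_cons_append_singleton _ _ _) _ (by simp [h])
  · exact chain_reaches_last C.chain2 (getLast_cons_append_singleton _ _ _) _ (by simp [h])

lemma NCycle.exists_child {C : NCycle N} {v : N.V} (hv : v ∈ C.verts) (hne : v ≠ C.h) :
    ∃ c, N.adj v c ∧ c ∈ C.verts := by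
  have aux : ∀ (s : List N.V), List.Chain N.adj C.r (s ++ [C.h]) →
      (∀ u ∈ s, u ∈ C.verts) → v ∈ C.r :: (s ++ [C.h]) → ∃ c, N.adj v c ∧ c ∈ C.verts := by
    intro s hs hsub hvmem
    rcases chain_next hs v hvmem with h | ⟨c, hc, hvc⟩
    · exact absurd (h.trans (getLast_cons_append_singleton _ _ _)) hne
    · refine ⟨c, hvc, ?_⟩
      rcases List.mem_append.mp hc with h | h
      · exact hsub c h
      · simp only [List.mem_singleton] at h
        exact h ▸ C.hyb_mem
  rcases NCycle.mem_verts.mp hv with rfl | rfl | h | h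
  · exact aux C.side1 C.chain1 (fun u hu => NCycle.mem_verts.mpr (Or.inr (Or.inr (Or.inl hu))))
      (by simp)
  · exact absurd rfl hne
  · exact aux C.side1 C.chain1 (fun u hu => NCycle.mem_verts.mpr (Or.inr (Or.inr (Or.inl hu))))
      (by simp [h])
  · exact aux C.side2 C.chain2 (fun u hu => NCycle.mem_verts.mpr (Or.inr (Or.inr (Or.inr hu))))
      (by simp [h])

lemma exists_nodup_chain_aux :
    ∀ (n : ℕ) (a b : N.V) (l : List N.V), l.length ≤ n → List.Chain N.adj a l →
      (a :: l).getLast (List.cons_ne_nil _ _) = b →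
      ∃ l', List.Chain N.adj a l' ∧ (a :: l').getLast (List.cons_ne_nil _ _) = b ∧
        (a :: l').Nodup ∧ l' ⊆ l := by
  intro n
  induction n with
  | zero =>
    intro a b l hl _ hb
    have hnil : l = [] := List.eq_nil_of_length_eq_zero (Nat.le_zero.mp hl)
    subst hnil
    exact ⟨[], List.Chain.nil, hb, by simp, by simp⟩
  | succ n ih =>
    intro a b l hl hc hb
    by_cases hal : a ∈ l
    · obtain ⟨s, t, rfl⟩ := List.append_of_mem hal
      have hct : List.Chain N.adj a t := (List.isChain_cons_split.mp hc).2
      have hbt : (a :: t).getLast (List.cons_ne_nil _ _) = b := by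
        rw [← hb]
        exact ((getLast_eq_of_eq (by simp : a :: (s ++ a :: t) = (a :: s) ++ (a :: t)) _ _).trans
          (List.getLast_append_of_ne_nil (l := a :: s) (l' := a :: t) (List.append_ne_nil_of_right_ne_nil _ (List.cons_ne_nil _ _)) (List.cons_ne_nil _ _))).symm
      have hlt : t.length ≤ n := by
        simp only [List.length_append, List.length_cons] at hl
        omega
      obtain ⟨l', h1, h2, h3, h4⟩ := ih a b t hlt hct hbt
      exact ⟨l', h1, h2, h3,
        fun x hx => List.mem_append.mpr (Or.inr (List.mem_cons_of_mem _ (h4 hx)))⟩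
    · cases l with
      | nil => exact ⟨[], List.Chain.nil, hb, by simp, by simp⟩
      | cons c l =>
        rcases List.chain_cons.mp hc with ⟨hac, hc'⟩
        have hbc : (c :: l).getLast (List.cons_ne_nil _ _) = b := by
          rw [← List.getLast_cons_cons (a := a) (b := c) (l := l)]; exact hb
        have hln : l.length ≤ n := by
          simp only [List.length_cons] at hl; omega
        obtain ⟨l', h1, h2, h3, h4⟩ := ih c b l hln hc' hbc
        refine ⟨c :: l', List.chain_cons.mpr ⟨hac, h1⟩,
          by rw [List.getLast_cons_cons]; exact h2, ?_, ?_⟩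
        · refine List.nodup_cons.mpr ⟨?_, h3⟩
          intro h
          rcases List.mem_cons.mp h with rfl | h'
          · exact hal (List.mem_cons_self)
          · exact hal (List.mem_cons_of_mem _ (h4 h'))
        · intro u hu
          rcases List.mem_cons.mp hu with rfl | h'
          · exact List.mem_cons_self
          · exact List.mem_cons_of_mem _ (h4 h')

lemma exists_nodup_chain {a b : N.V} (h : N.reaches a b) :
    ∃ l, List.Chain N.adj a l ∧ (a :: l).getLast (List.cons_ne_nil _ _) = b ∧
      (a :: l).Nodup := by
  obtain ⟨l, hc, hb⟩ := List.exists_isChain_cons_of_relationReflTransGen h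
  obtain ⟨l', h1, h2, h3, _⟩ := exists_nodup_chain_aux l.length a b l le_rfl hc hb
  exact ⟨l', h1, h2, h3⟩

lemma first_split {l : List N.V} {P : N.V → Prop} (h : ∃ v ∈ l, P v) :
    ∃ s c t, l = s ++ c :: t ∧ P c ∧ ∀ a ∈ s, ¬ P a := by
  classical
  induction l with
  | nil => simp at h
  | cons hd tl ih =>
    by_cases hp : P hd
    · exact ⟨[], hd, tl, rfl, hp, by simp⟩
    · have h' : ∃ v ∈ tl, P v := by
        obtain ⟨v, hv, hPv⟩ := h
        rcases List.mem_cons.mp hv with rfl | hv'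
        · exact absurd hPv hp
        · exact ⟨v, hv', hPv⟩
      obtain ⟨s, c, t, heq, hPc, hs⟩ := ih h'
      refine ⟨hd :: s, c, t, by rw [List.cons_append, heq], hPc, ?_⟩
      intro a ha
      rcases List.mem_cons.mp ha with rfl | ha'
      · exact hp
      · exact hs a ha'

/-- Two distinct children of `p` with a common descendant give rise to a cycle
rooted at `p` containing both children. -/
lemma two_children_cycle {p u₁ u₂ m : N.V} (h1 : N.adj p u₁) (h2 : N.adj p u₂)
    (hne : u₁ ≠ u₂) (r1 : N.reaches u₁ m) (r2 : N.reaches u₂ m) :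
    ∃ C : NCycle N, C.r = p ∧ u₁ ∈ C.verts ∧ u₂ ∈ C.verts := by
  classical
  obtain ⟨l₁, hc₁, hb₁, hnd₁⟩ := exists_nodup_chain r1
  obtain ⟨l₂, hc₂, hb₂, hnd₂⟩ := exists_nodup_chain r2
  have hm₁ : m ∈ u₁ :: l₁ := hb₁ ▸ List.getLast_mem _
  have hm₂ : m ∈ u₂ :: l₂ := hb₂ ▸ List.getLast_mem _
  obtain ⟨s, c, t, heq, hcP, hsP⟩ :=
    first_split (l := u₁ :: l₁) (P := fun v => v ∈ u₂ :: l₂) ⟨m, hm₁, hm₂⟩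
  obtain ⟨s₂, t₂, heq₂⟩ := List.append_of_mem hcP
  have hch₁ : List.Chain N.adj p (u₁ :: l₁) := List.chain_cons.mpr ⟨h1, hc₁⟩
  have hch₂ : List.Chain N.adj p (u₂ :: l₂) := List.chain_cons.mpr ⟨h2, hc₂⟩
  rw [heq] at hch₁ hnd₁
  rw [heq₂] at hch₂ hnd₂
  have hchain1 : List.Chain N.adj p (s ++ [c]) := (List.isChain_cons_split.mp hch₁).1
  have hchain2 : List.Chain N.adj p (s₂ ++ [c]) := (List.isChain_cons_split.mp hch₂).1
  have htg : ∀ v ∈ s ++ c :: t, Relation.TransGen N.adj p v := chain_mem_transGen hch₁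
  have htg₂ : ∀ v ∈ s₂ ++ c :: t₂, Relation.TransGen N.adj p v := chain_mem_transGen hch₂
  have hpc : p ≠ c := by
    intro h
    exact N.acyclic p (htg p (by simp [h]))
  have hsub1 : List.Sublist (s ++ [c]) (s ++ c :: t) :=
    List.Sublist.append_left ((List.nil_sublist t).cons₂ c) s
  have hsub2 : List.Sublist (s₂ ++ [c]) (s₂ ++ c :: t₂) :=
    List.Sublist.append_left ((List.nil_sublist t₂).cons₂ c) s₂
  have hmem1 : ∀ v ∈ s ++ [c], v ∈ s ++ c :: t := fun v hv => hsub1.mem hv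
  have hmem2 : ∀ v ∈ s₂ ++ [c], v ∈ s₂ ++ c :: t₂ := fun v hv => hsub2.mem hv
  have hnodup1 : (p :: (s ++ [c])).Nodup := by
    refine List.nodup_cons.mpr ⟨?_, List.Nodup.sublist hsub1 hnd₁⟩
    intro hp
    exact N.acyclic p (htg p (hmem1 p hp))
  have hnodup2 : (p :: (s₂ ++ [c])).Nodup := by
    refine List.nodup_cons.mpr ⟨?_, List.Nodup.sublist hsub2 hnd₂⟩
    intro hp
    exact N.acyclic p (htg₂ p (hmem2 p hp))
  have hdisj : ∀ v ∈ s, v ∉ s₂ := by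
    intro v hv hv₂
    exact hsP v hv (heq₂ ▸ List.mem_append.mpr (Or.inl hv₂))
  have hnontriv : s ≠ [] ∨ s₂ ≠ [] := by
    by_contra hcon
    push_neg at hcon
    obtain ⟨hs0, hs20⟩ := hcon
    rw [hs0, List.nil_append] at heq
    rw [hs20, List.nil_append] at heq₂
    injection heq with e1 _
    injection heq₂ with e2 _
    exact hne (e1.trans e2.symm)
  have hu1 : u₁ = c ∨ u₁ ∈ s := by
    rcases s with _ | ⟨d, s'⟩
    · rw [List.nil_append] at heq
      injection heq with e _
      exact Or.inl e
    · injection heq with e _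
      exact Or.inr (by rw [e]; exact List.mem_cons_self)
  have hu2 : u₂ = c ∨ u₂ ∈ s₂ := by
    rcases s₂ with _ | ⟨d, s'⟩
    · rw [List.nil_append] at heq₂
      injection heq₂ with e _
      exact Or.inl e
    · injection heq₂ with e _
      exact Or.inr (by rw [e]; exact List.mem_cons_self)
  refine ⟨⟨p, c, s, s₂, hchain1, hchain2, hpc, hnodup1, hnodup2, hdisj, hnontriv⟩, rfl, ?_, ?_⟩
  · rcases hu1 with e | hmem
    · exact NCycle.mem_verts.mpr (Or.inr (Or.inl e))
    · exact NCycle.mem_verts.mpr (Or.inr (Or.inr (Or.inl hmem)))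
  · rcases hu2 with e | hmem
    · exact NCycle.mem_verts.mpr (Or.inr (Or.inl e))
    · exact NCycle.mem_verts.mpr (Or.inr (Or.inr (Or.inr hmem)))

/-- In a level-1 network: a vertex of the cycle `C` cannot have a child off the
cycle sharing a common descendant with another of its children. -/
lemma off_child_clash (hN : N.IsLevelOne) (C : NCycle N) {p w c m : N.V} (hp : p ∈ C.verts)
    (haw : N.adj p w) (hw : w ∉ C.verts) (hac : N.adj p c) (hne : w ≠ c)
    (rw : N.reaches w m) (rc : N.reaches c m) : False := by
  obtain ⟨C', hr, hw', _⟩ := two_children_cycle haw hac hne rw rc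
  have hv := hN C' C p (hr ▸ C'.root_mem) hp
  exact hw (hv ▸ hw')

/-- In a level-1 network: a vertex of the cycle `C` with two distinct children
having a common descendant must be the root of `C`. -/
lemma two_children_root (hN : N.IsLevelOne) (C : NCycle N) {p u₁ u₂ m : N.V}
    (hp : p ∈ C.verts) (h1 : N.adj p u₁) (h2 : N.adj p u₂) (hne : u₁ ≠ u₂)
    (r1 : N.reaches u₁ m) (r2 : N.reaches u₂ m) : p = C.r := by
  obtain ⟨C', hr, _, _⟩ := two_children_cycle h1 h2 hne r1 r2
  have hv := hN C' C p (hr ▸ C'.root_mem) hp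
  have hpr : N.reaches p C.r := hr ▸ C'.root_reaches (by rw [hv]; exact C.root_mem)
  exact reaches_antisymm hpr (C.root_reaches hp)

/-- A path leaving the cycle can never return to it. -/
lemma reentry (hN : N.IsLevelOne) (C : NCycle N) {v w u : N.V} (hv : v ∈ C.verts)
    (hadj : N.adj v w) (hw : w ∉ C.verts) (hu : u ∈ C.verts) (hr : N.reaches w u) : False := by
  by_cases hvh : v = C.h
  · subst hvh
    exact no_cycle hadj (reaches_trans hr (C.reaches_hyb hu))
  · obtain ⟨c, hc, hcC⟩ := C.exists_child hv hvh
    exact off_child_clash hN C hv hadj hw hc (fun e => hw (e ▸ hcC))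
      (reaches_trans hr (C.reaches_hyb hu)) (C.reaches_hyb hcC)

/-- Any vertex on a path between two cycle vertices lies on the cycle. -/
lemma mem_verts_between (hN : N.IsLevelOne) (C : NCycle N) {a v b : N.V}
    (hav : N.reaches a v) (hvb : N.reaches v b) (hb : b ∈ C.verts) (ha : a ∈ C.verts) :
    v ∈ C.verts := by
  revert ha
  induction hav using Relation.ReflTransGen.head_induction_on with
  | refl => exact fun h => h
  | @head a' c h' hcv ih =>
    intro ha'
    by_cases hc : c ∈ C.verts
    · exact ih hc
    · exact (reentry hN C ha' h' hc hb (reaches_trans hcv hvb)).elim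

/-- Two incomparable descendants of a vertex give a divergence point. -/
lemma diverge {a : N.V} {l : List N.V} {b c : N.V} (hc : List.Chain N.adj a l)
    (hb : (a :: l).getLast (List.cons_ne_nil _ _) = b) (hac : N.reaches a c)
    (hbc : ¬ N.reaches b c) (hcb : ¬ N.reaches c b) :
    ∃ p u₁ u₂, N.reaches a p ∧ N.adj p u₁ ∧ N.adj p u₂ ∧ u₁ ≠ u₂ ∧
      N.reaches u₁ b ∧ N.reaches u₂ c := by
  induction l generalizing a with
  | nil =>
    have hab : a = b := by simpa using hb
    subst hab
    exact absurd hac hbc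
  | cons d l ih =>
    rcases List.chain_cons.mp hc with ⟨had, hc'⟩
    have hb' : (d :: l).getLast (List.cons_ne_nil _ _) = b := by
      rw [← List.getLast_cons_cons (a := a) (b := d) (l := l)]; exact hb
    rcases Relation.ReflTransGen.cases_head hac with heq | ⟨e, hae, hec⟩
    · subst heq
      exact absurd (chain_reaches_last hc hb a (by simp)) hcb
    · by_cases hed : e = d
      · subst hed
        obtain ⟨p, u₁, u₂, g1, g2, g3, g4, g5, g6⟩ := ih hc' hb' hec
        exact ⟨p, u₁, u₂, Relation.ReflTransGen.head had g1, g2, g3, g4, g5, g6⟩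
      · exact ⟨a, d, e, reaches_refl a, had, hae, fun h => hed h.symm,
          chain_reaches_last hc' hb' d (by simp), hec⟩

/-- Key elimination: an off-cycle child `w` of a cycle vertex `v` cannot share a
descendant `m` with a cycle vertex `a` properly below `v`. -/
lemma off_child_kill (hN : N.IsLevelOne) (C : NCycle N) {v w a m : N.V}
    (hv : v ∈ C.verts) (hadj : N.adj v w) (hw : w ∉ C.verts)
    (ha : a ∈ C.verts) (hva : N.reaches v a) (hvne : v ≠ a)
    (hwm : N.reaches w m) (ham : N.reaches a m) : False := by
  rcases Relation.ReflTransGen.cases_head hva with h | ⟨w₁, h₁, h₁a⟩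
  · exact hvne h
  · have hw₁C : w₁ ∈ C.verts :=
      mem_verts_between hN C (Relation.ReflTransGen.single h₁) h₁a ha hv
    exact off_child_clash hN C hv hadj hw h₁ (fun e => hw (e ▸ hw₁C)) hwm
      (reaches_trans h₁a ham)

end Helpers

end PhyloNetwork

open PhyloNetwork in
/-- Lemma (tripcyc): in a labelled level-1 network `(N,t)` inducing `δ = δ_N`,
for a cycle `C`, `x ∈ H(C)`, `y, z ∈ R(C) − H(C)` with
`t(v_C(z)) = t(r(C)) ≠ t(v_C(y))`: `v_C(z)` lies on the directed path from
`v_C(y)` to `h(C)` iff `y|xz` is a `δ_N`-triplet, i.e.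
`δ(x,y,z) = δ(x,y) = δ(y,z) ≠ δ(x,z)`. -/
theorem lastAnc_on_path_iff_triplet {X M : Type}
    [Fintype X] [DecidableEq X] [Fintype M] [DecidableEq M]
    (N : PhyloNetwork X) (hN : N.IsLevelOne) (t : N.V → M)
    (d : SymbolicDissim3 X M) (hrep : N.Represents t d)
    (C : NCycle N) (x y z : X)
    (hxy : x ≠ y) (hxz : x ≠ z) (hyz : y ≠ z)
    (hx : x ∈ C.HC) (hy : y ∈ C.RC ∧ y ∉ C.HC) (hz : z ∈ C.RC ∧ z ∉ C.HC)
    (vy vz : N.V) (hvy : C.LastAnc vy y) (hvz : C.LastAnc vz z)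
    (hlz : t vz = t C.r) (hly : t vy ≠ t C.r) :
    (N.reaches vy vz ∧ N.reaches vz C.h) ↔
      (d.val {x, y, z} = d.val {x, y} ∧ d.val {x, y} = d.val {y, z} ∧
        d.val {y, z} ≠ d.val {x, z}) := by
  classical
  obtain ⟨hvyC, hvyy, hvyU⟩ := hvy
  obtain ⟨hvzC, hvzz, hvzU⟩ := hvz
  obtain ⟨hyR, hyH⟩ := hy
  obtain ⟨hzR, hzH⟩ := hz
  have hxh : N.reaches C.h (N.leaf x) := hx
  have hvyh : vy ≠ C.h := by rintro rfl; exact hyH hvyy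
  have hvzh : vz ≠ C.h := by rintro rfl; exact hzH hvzz
  have hvyr : vy ≠ C.r := fun e => hly (by rw [e])
  have hvyvz : vy ≠ vz := fun e => hly (by rw [e, hlz])
  have hxyY : ({x, y} : Finset X).card = 2 := Finset.card_pair hxy
  have hyzY : ({y, z} : Finset X).card = 2 := Finset.card_pair hyz
  have hxzY : ({x, z} : Finset X).card = 2 := Finset.card_pair hxz
  have hxyzY : ({x, y, z} : Finset X).card = 3 := by
    rw [Finset.card_insert_of_notMem (by simp [hxy, hxz]), Finset.card_pair hyz]
  have lca_xy : N.IsLca {x, y} vy := by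
    constructor
    · intro a ha
      simp only [Finset.mem_insert, Finset.mem_singleton] at ha
      rcases ha with rfl | rfl
      · exact reaches_trans (C.reaches_hyb hvyC) hxh
      · exact hvyy
    · rintro w hadj hall
      have hwx : N.reaches w (N.leaf x) := hall x (by simp)
      have hwy : N.reaches w (N.leaf y) := hall y (by simp)
      by_cases hwC : w ∈ C.verts
      · exact no_cycle hadj (hvyU w hwC hwy)
      · exact off_child_kill hN C hvyC hadj hwC C.hyb_mem (C.reaches_hyb hvyC) hvyh hwx hxh
  have dxy : d.val {x, y} = some (t vy) := hrep _ (Or.inl hxyY) vy lca_xy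
  constructor
  · rintro ⟨hf, -⟩
    have lca_xyz : N.IsLca {x, y, z} vy := by
      constructor
      · intro a ha
        simp only [Finset.mem_insert, Finset.mem_singleton] at ha
        rcases ha with rfl | rfl | rfl
        · exact reaches_trans (C.reaches_hyb hvyC) hxh
        · exact hvyy
        · exact reaches_trans hf hvzz
      · rintro w hadj hall
        have hwx : N.reaches w (N.leaf x) := hall x (by simp)
        have hwy : N.reaches w (N.leaf y) := hall y (by simp)
        by_cases hwC : w ∈ C.verts
        · exact no_cycle hadj (hvyU w hwC hwy)
        · exact off_child_kill hN C hvyC hadj hwC C.hyb_mem (C.reaches_hyb hvyC) hvyh hwx hxh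
    have lca_yz : N.IsLca {y, z} vy := by
      constructor
      · intro a ha
        simp only [Finset.mem_insert, Finset.mem_singleton] at ha
        rcases ha with rfl | rfl
        · exact hvyy
        · exact reaches_trans hf hvzz
      · rintro w hadj hall
        have hwy : N.reaches w (N.leaf y) := hall y (by simp)
        have hwz : N.reaches w (N.leaf z) := hall z (by simp)
        by_cases hwC : w ∈ C.verts
        · exact no_cycle hadj (hvyU w hwC hwy)
        · exact off_child_kill hN C hvyC hadj hwC hvzC hf hvyvz hwz hvzz
    have lca_xz : N.IsLca {x, z} vz := by
      constructor
      · intro a ha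
        simp only [Finset.mem_insert, Finset.mem_singleton] at ha
        rcases ha with rfl | rfl
        · exact reaches_trans (C.reaches_hyb hvzC) hxh
        · exact hvzz
      · rintro w hadj hall
        have hwx : N.reaches w (N.leaf x) := hall x (by simp)
        have hwz : N.reaches w (N.leaf z) := hall z (by simp)
        by_cases hwC : w ∈ C.verts
        · exact no_cycle hadj (hvzU w hwC hwz)
        · exact off_child_kill hN C hvzC hadj hwC C.hyb_mem (C.reaches_hyb hvzC) hvzh hwx hxh
    have dxyz : d.val {x, y, z} = some (t vy) := hrep _ (Or.inr hxyzY) vy lca_xyz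
    have dyz : d.val {y, z} = some (t vy) := hrep _ (Or.inl hyzY) vy lca_yz
    have dxz : d.val {x, z} = some (t vz) := hrep _ (Or.inl hxzY) vz lca_xz
    refine ⟨by rw [dxyz, dxy], by rw [dxy, dyz], ?_⟩
    rw [dyz, dxz]
    simp only [ne_eq, Option.some.injEq]
    intro hcon
    exact hly (hcon.trans hlz)
  · rintro ⟨-, h2, -⟩
    refine ⟨?_, C.reaches_hyb hvzC⟩
    by_contra hnr
    have hyzval : d.val {y, z} = some (t vz) ∨ d.val {y, z} = some (t C.r) := by
      by_cases hzy : N.reaches vz vy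
      · left
        have lca : N.IsLca {y, z} vz := by
          constructor
          · intro a ha
            simp only [Finset.mem_insert, Finset.mem_singleton] at ha
            rcases ha with rfl | rfl
            · exact reaches_trans hzy hvyy
            · exact hvzz
          · rintro w hadj hall
            have hwy : N.reaches w (N.leaf y) := hall y (by simp)
            have hwz : N.reaches w (N.leaf z) := hall z (by simp)
            by_cases hwC : w ∈ C.verts
            · exact no_cycle hadj (hvzU w hwC hwz)
            · exact off_child_kill hN C hvzC hadj hwC hvyC hzy (Ne.symm hvyvz) hwy hvyy
        exact hrep _ (Or.inl hyzY) vz lca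
      · right
        have lca : N.IsLca {y, z} C.r := by
          constructor
          · intro a ha
            simp only [Finset.mem_insert, Finset.mem_singleton] at ha
            rcases ha with rfl | rfl
            · exact hyR
            · exact hzR
          · rintro w hadj hall
            have hwy : N.reaches w (N.leaf y) := hall y (by simp)
            have hwz : N.reaches w (N.leaf z) := hall z (by simp)
            by_cases hwC : w ∈ C.verts
            · have hwvy : N.reaches w vy := hvyU w hwC hwy
              have hwvz : N.reaches w vz := hvzU w hwC hwz
              have hwr : w ≠ C.r := by rintro rfl; exact no_cycle hadj (reaches_refl _)
              obtain ⟨l, hl, hlast⟩ := List.exists_isChain_cons_of_relationReflTransGen hwvy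
              obtain ⟨p, u₁, u₂, hwp, hpu1, hpu2, hu12, hu1vy, hu2vz⟩ :=
                diverge hl hlast hwvz hnr hzy
              have hpC : p ∈ C.verts := mem_verts_between hN C hwp
                (reaches_trans (Relation.ReflTransGen.single hpu1) hu1vy) hvyC hwC
              have hu1C : u₁ ∈ C.verts :=
                mem_verts_between hN C (Relation.ReflTransGen.single hpu1) hu1vy hvyC hpC
              have hu2C : u₂ ∈ C.verts :=
                mem_verts_between hN C (Relation.ReflTransGen.single hpu2) hu2vz hvzC hpC
              have hpr : p = C.r := two_children_root hN C hpC hpu1 hpu2 hu12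
                (C.reaches_hyb hu1C) (C.reaches_hyb hu2C)
              exact hwr (reaches_antisymm (hpr ▸ hwp) (Relation.ReflTransGen.single hadj))
            · exact off_child_kill hN C C.root_mem hadj hwC hvyC (C.root_reaches hvyC)
                (Ne.symm hvyr) hwy hvyy
        exact hrep _ (Or.inl hyzY) C.r lca
    rcases hyzval with h | h
    · rw [dxy, h] at h2
      exact hly ((Option.some_inj.mp h2).trans hlz)
    · rw [dxy, h] at h2
      exact hly (Option.some_inj.mp h2)
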